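/- Let K be a group that contains no subgroup isomorphic to ℤ × ℤ and let α be an automorphism of K. If the semidirect product G = K ⋊_α ℤ contains a subgroup isomorphic to ℤ × ℤ, then α has a periodic conjugacy class: there exist z ∈ K with z ≠ e, an integer i ≠ 0, and k ∈ K such that α^i(z) = k⁻¹ z k. -/

import Mathlib

/-- The action of `Multiplicative ℤ` on `K` whose generator acts by the automorphism `α`. -/
def zAction {K : Type*} [Group K] (α : MulAut K) : Multiplicative ℤ →* MulAut K where
  toFun n := α ^ (Multiplicative.toAdd n)
  map_one' := by simp
  map_mul' m n := by simp [zpow_add]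

/-- The semidirect product `K ⋊_α ℤ`, i.e. the non-proper HNN extension of `K` by `α`. -/
abbrev zSemidirect (K : Type*) [Group K] (α : MulAut K) :=
  SemidirectProduct K (Multiplicative ℤ) (zAction α)

lemma aux13 {K : Type*} [Group K] (α : MulAut K) (a b : zSemidirect K α)
    (hcomm : Commute a b)
    (hm : Multiplicative.toAdd a.right ≠ 0)
    (hne : a ^ (Multiplicative.toAdd b.right) * b ^ (-(Multiplicative.toAdd a.right)) ≠ 1) :
    ∃ (z : K) (i : ℤ) (k : K), z ≠ 1 ∧ i ≠ 0 ∧ (α ^ i) z = k⁻¹ * z * k := by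
  set m := Multiplicative.toAdd a.right with hm'
  set n := Multiplicative.toAdd b.right with hn'
  set c := a ^ n * b ^ (-m) with hc
  clear_value c
  have hcr : c.right = 1 := by
    have h1 : c.right = a.right ^ n * b.right ^ (-m) := by
      show SemidirectProduct.rightHom c = _
      rw [hc, map_mul, map_zpow, map_zpow]; rfl
    rw [h1]
    apply Multiplicative.toAdd.injective
    simp only [toAdd_mul, toAdd_zpow, smul_eq_mul, toAdd_one, ← hm', ← hn']
    ring
  have hz : c.left ≠ 1 := by
    intro h
    exact hne (SemidirectProduct.ext h hcr)
  have hac : Commute a c := hc ▸ (((Commute.refl a).zpow_right n).mul_right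
    (hcomm.zpow_right (-m)))
  have hleft := congrArg SemidirectProduct.left hac.eq
  rw [SemidirectProduct.mul_left, SemidirectProduct.mul_left, hcr, map_one,
    MulAut.one_apply] at hleft
  refine ⟨c.left, m, a.left, hz, hm, ?_⟩
  calc ((zAction α) a.right) c.left
      = a.left⁻¹ * (a.left * ((zAction α) a.right) c.left) := by group
    _ = a.left⁻¹ * (c.left * a.left) := by rw [hleft]
    _ = a.left⁻¹ * c.left * a.left := by group

/-- If `K` contains no subgroup isomorphic to `ℤ × ℤ` and the semidirect
product `G = K ⋊_α ℤ` contains a subgroup isomorphic to `ℤ × ℤ`, then `α` has a periodic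
conjugacy class: there are `z ∈ K`, `z ≠ 1`, `i ≠ 0` and `k ∈ K` with `αⁱ(z) = k⁻¹ z k`. -/
theorem statement13 {K : Type*} [Group K]
    (hK : ∀ H : Subgroup K, ¬ Nonempty (↥H ≃* Multiplicative (ℤ × ℤ)))
    (α : MulAut K)
    (hG : ∃ S : Subgroup (zSemidirect K α), Nonempty (↥S ≃* Multiplicative (ℤ × ℤ))) :
    ∃ (z : K) (i : ℤ) (k : K), z ≠ 1 ∧ i ≠ 0 ∧ (α ^ i) z = k⁻¹ * z * k := by
  obtain ⟨S, ⟨e⟩⟩ := hG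
  set a' : ↥S := e.symm (Multiplicative.ofAdd ((1 : ℤ), (0 : ℤ))) with ha'
  set b' : ↥S := e.symm (Multiplicative.ofAdd ((0 : ℤ), (1 : ℤ))) with hb'
  set a : zSemidirect K α := (a' : zSemidirect K α) with ha
  set b : zSemidirect K α := (b' : zSemidirect K α) with hb
  have hcomm : Commute a b := by
    have h1 : a' * b' = b' * a' := by
      apply e.injective
      rw [map_mul, map_mul, mul_comm]
    have := congrArg (fun x : ↥S => (x : zSemidirect K α)) h1
    exact this
  have key : ∀ p q : ℤ, a ^ p * b ^ q = 1 → p = 0 ∧ q = 0 := by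
    intro p q h
    have h1 : ((a' ^ p * b' ^ q : ↥S) : zSemidirect K α) = ((1 : ↥S) : zSemidirect K α) := by
      push_cast
      exact h
    have h2 : a' ^ p * b' ^ q = 1 := Subtype.val_injective h1
    have h3 := congrArg e h2
    rw [map_mul, map_zpow, map_zpow, ha', hb', e.apply_symm_apply, e.apply_symm_apply,
      map_one] at h3
    have h4 := congrArg Multiplicative.toAdd h3
    simp only [toAdd_mul, toAdd_zpow, toAdd_ofAdd, toAdd_one, Prod.smul_mk, smul_eq_mul,
      mul_one, mul_zero, Prod.mk_add_mk, Prod.mk_eq_zero, add_zero, zero_add] at h4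
    exact h4
  by_cases hA : Multiplicative.toAdd a.right = 0
  · by_cases hB : Multiplicative.toAdd b.right = 0
    · -- S lies in K : contradiction
      exfalso
      have har : a.right = 1 := Multiplicative.toAdd.injective hA
      have hbr : b.right = 1 := Multiplicative.toAdd.injective hB
      have hall : ∀ s : ↥S, (s : zSemidirect K α).right = 1 := by
        intro s
        obtain ⟨p1, p2, hp⟩ : ∃ p1 p2 : ℤ, Multiplicative.toAdd (e s) = (p1, p2) :=
          ⟨_, _, rfl⟩
        have h5 : e s = (Multiplicative.ofAdd ((1:ℤ),(0:ℤ))) ^ p1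
            * (Multiplicative.ofAdd ((0:ℤ),(1:ℤ))) ^ p2 := by
          apply Multiplicative.toAdd.injective
          simp [toAdd_mul, toAdd_zpow, Prod.smul_mk, hp]
        have h6 : s = a' ^ p1 * b' ^ p2 := by
          apply e.injective
          rw [map_mul, map_zpow, map_zpow, ha', hb', e.apply_symm_apply, e.apply_symm_apply]
          exact h5
        have hs : (s : zSemidirect K α) = a ^ p1 * b ^ p2 := by
          rw [h6]
          push_cast
          rfl
        have := congrArg SemidirectProduct.rightHom hs
        rw [map_mul, map_zpow, map_zpow] at this
        simpa [SemidirectProduct.rightHom, har, hbr] using this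
      let ψ : ↥S →* K :=
        { toFun := fun s => (s : zSemidirect K α).left,
          map_one' := rfl,
          map_mul' := fun s t => by
            show ((s : zSemidirect K α) * (t : zSemidirect K α)).left = _
            rw [SemidirectProduct.mul_left, hall s, map_one, MulAut.one_apply] }
      have hinj : Function.Injective ψ := by
        intro s t h
        apply Subtype.ext
        exact SemidirectProduct.ext h (by rw [hall s, hall t])
      exact hK ψ.range ⟨(MonoidHom.ofInjective hinj).symm.trans e⟩
    · -- b has nonzero projection; use aux13 with (b, a)
      apply aux13 α b a hcomm.symm hB
      intro h
      have h2 : a ^ (-(Multiplicative.toAdd b.right)) * b ^ (Multiplicative.toAdd a.right) = 1 := by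
        rw [(hcomm.zpow_zpow (-(Multiplicative.toAdd b.right)) (Multiplicative.toAdd a.right)).eq]
        exact h
      exact hB (neg_eq_zero.mp (key _ _ h2).1)
  · -- a has nonzero projection; use aux13 with (a, b)
    apply aux13 α a b hcomm hA
    intro h
    exact hA (neg_eq_zero.mp (key _ _ h).2)
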